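/- arXiv:1401.5688 — 4 statements merged into one kernel-verified Lean document; each statement's English description precedes it below -/
import Mathlib

section
/- Let P_i and P_g be probability mass functions on a finite set S such that P_g(s) > 0 implies P_i(s) > 0, and suppose the likelihood ratios P_g(s)/P_i(s) (on the support of P_g) are bounded. Define M(t) = Σ_{P_i(s)>0} P_i(s)^{1-t} P_g(s)^t. Then as γ → 0⁺, M(1-√γ) = 1 - √γ · D + O(γ), where D = Σ_{P_g(s)>0} P_g(s) ln(P_g(s)/P_i(s)) is the Kullback–Leibler divergence (in nats) of P_g from P_i. -/
open Finset Real Asymptotics Filter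

/-- First-order expansion of the moment generating function near `t = 1`:
`M(1-√γ) = 1 - √γ·D + O(γ)` as `γ → 0⁺`, where `D` is the KL divergence in nats. -/
theorem stmt6 {S : Type*} [Fintype S] (Pi Pg : S → ℝ)
    (hPi0 : ∀ s, 0 ≤ Pi s) (hPg0 : ∀ s, 0 ≤ Pg s)
    (hPi1 : ∑ s, Pi s = 1) (hPg1 : ∑ s, Pg s = 1)
    (hac : ∀ s, 0 < Pg s → 0 < Pi s)
    (hbdd : ∃ B : ℝ, ∀ s, 0 < Pg s → Pg s / Pi s ≤ B)
    (M : ℝ → ℝ)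
    (hM : ∀ t, M t = ∑ s ∈ Finset.univ.filter (fun s => 0 < Pi s),
        (Pi s) ^ (1 - t) * (Pg s) ^ t)
    (D : ℝ)
    (hD : D = ∑ s ∈ Finset.univ.filter (fun s => 0 < Pg s),
        Pg s * Real.log (Pg s / Pi s)) :
    (fun γ : ℝ => M (1 - Real.sqrt γ) - (1 - Real.sqrt γ * D))
      =O[nhdsWithin 0 (Set.Ioi 0)] (fun γ : ℝ => γ) := by
  -- The summand function
  set F : S → ℝ → ℝ := fun s γ =>
    Pg s * (Real.exp (-(Real.sqrt γ * Real.log (Pg s / Pi s)))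
      - (1 - Real.sqrt γ * Real.log (Pg s / Pi s))) with hF
  have hsum : (fun γ : ℝ => ∑ s, F s γ) =O[nhdsWithin 0 (Set.Ioi 0)]
      (fun γ : ℝ => γ) := by
    refine (Asymptotics.IsBigO.sum (A := F) (s := Finset.univ) ?_).congr_left (fun γ => Finset.sum_apply γ _ _)
    intro s _
    rw [Asymptotics.isBigO_iff]
    refine ⟨Pg s * (Real.log (Pg s / Pi s)) ^ 2, ?_⟩
    set r := Real.log (Pg s / Pi s) with hr
    have hδ : (0:ℝ) < 1 / (r ^ 2 + 1) := by positivity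
    filter_upwards [Ioo_mem_nhdsGT_of_mem (Set.left_mem_Ico.2 hδ)] with γ hγ
    obtain ⟨hγ0, hγ1⟩ := hγ
    set x := Real.sqrt γ with hx
    have hx2 : x ^ 2 = γ := Real.sq_sqrt hγ0.le
    have hu2 : (-(x * r)) ^ 2 = γ * r ^ 2 := by rw [neg_sq, mul_pow, hx2]
    have hu1 : |(-(x * r))| ≤ 1 := by
      have h1 : (-(x * r)) ^ 2 ≤ 1 := by
        rw [hu2]
        have h2 : γ * (r ^ 2 + 1) < 1 := by
          rw [lt_div_iff₀ (by positivity)] at hγ1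
          linarith
        nlinarith [sq_nonneg r]
      calc |(-(x * r))| = Real.sqrt ((-(x * r)) ^ 2) := (Real.sqrt_sq_eq_abs _).symm
        _ ≤ Real.sqrt 1 := Real.sqrt_le_sqrt h1
        _ = 1 := Real.sqrt_one
    have key : |Real.exp (-(x * r)) - 1 - (-(x * r))| ≤ (-(x * r)) ^ 2 :=
      Real.abs_exp_sub_one_sub_id_le hu1
    have : F s γ = Pg s * (Real.exp (-(x * r)) - 1 - (-(x * r))) := by
      simp only [hF, hr, hx]; ring
    rw [this]
    rw [Real.norm_eq_abs, Real.norm_eq_abs, abs_mul, abs_of_nonneg (hPg0 s),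
      abs_of_pos hγ0]
    calc Pg s * |Real.exp (-(x * r)) - 1 - (-(x * r))|
        ≤ Pg s * (γ * r ^ 2) := by
          rw [← hu2]; exact mul_le_mul_of_nonneg_left key (hPg0 s)
      _ = Pg s * r ^ 2 * γ := by ring
  refine hsum.congr' ?_ EventuallyEq.rfl
  filter_upwards [Ioo_mem_nhdsGT_of_mem (Set.left_mem_Ico.2 (one_pos))] with γ hγ
  obtain ⟨hγ0, hγ1⟩ := hγ
  set x := Real.sqrt γ with hx
  have hx0 : 0 < x := Real.sqrt_pos.2 hγ0
  have hx1 : x < 1 := by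
    rw [hx, show (1:ℝ) = Real.sqrt 1 by simp]
    exact Real.sqrt_lt_sqrt hγ0.le hγ1
  have hM' : M (1 - x) = ∑ s, (if 0 < Pi s then Pi s ^ x * Pg s ^ (1 - x) else 0) := by
    rw [hM]
    rw [Finset.sum_filter]
    congr 1
    ext s
    congr 2 <;> ring_nf
  have hD' : D = ∑ s, Pg s * Real.log (Pg s / Pi s) := by
    rw [hD]
    apply Finset.sum_filter_of_ne
    intro s _ hne
    rcases lt_or_eq_of_le (hPg0 s) with h | h
    · exact h
    · exact absurd (by simp [← h]) hne
  have h1D : 1 - x * D = ∑ s, Pg s * (1 - x * Real.log (Pg s / Pi s)) := by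
    have hswap : ∑ s, Pg s * (1 - x * Real.log (Pg s / Pi s))
        = (∑ s, Pg s) - x * ∑ s, Pg s * Real.log (Pg s / Pi s) := by
      rw [Finset.mul_sum, ← Finset.sum_sub_distrib]
      exact Finset.sum_congr rfl fun s _ => by ring
    rw [hswap, hPg1, hD']
  symm
  rw [hM', h1D, ← Finset.sum_sub_distrib]
  apply Finset.sum_congr rfl
  intro s _
  by_cases h : 0 < Pi s
  · by_cases hg : 0 < Pg s
    · have hterm : Pi s ^ x * Pg s ^ (1 - x)
          = Pg s * Real.exp (-(x * Real.log (Pg s / Pi s))) := by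
        have hPg1x : Pg s ^ (1 - x) = Pg s / Pg s ^ x := by
          rw [Real.rpow_sub hg, Real.rpow_one]
        have hlog : Real.log (Pg s / Pi s) = Real.log (Pg s) - Real.log (Pi s) :=
          Real.log_div (ne_of_gt hg) (ne_of_gt h)
        have hexp : Real.exp (-(x * (Real.log (Pg s) - Real.log (Pi s))))
            = Pi s ^ x / Pg s ^ x := by
          rw [Real.rpow_def_of_pos h, Real.rpow_def_of_pos hg, ← Real.exp_sub]
          ring_nf
        rw [hlog, hexp, hPg1x]
        have hPgx : Pg s ^ x ≠ 0 := ne_of_gt (Real.rpow_pos_of_pos hg x)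
        field_simp
      rw [if_pos h, hterm, hF]
      ring
    · have hg0 : Pg s = 0 := le_antisymm (not_lt.1 hg) (hPg0 s)
      rw [if_pos h, hg0, hF]
      simp only [hg0]
      rw [Real.zero_rpow (by linarith : 1 - x ≠ 0)]
      ring
  · have hg0 : Pg s = 0 := by
      by_contra hne
      exact h (hac s (lt_of_le_of_ne (hPg0 s) (Ne.symm hne)))
    rw [if_neg h, hF]
    simp [hg0]
end

section
/- Let h(x) = -x log₂ x - (1-x) log₂(1-x) be the binary entropy function. Then lim_{c→∞} c² · (1 - h(1/2 + 1/(2c))) = 1/(2 ln 2). -/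
open Real Filter

/-- The binary entropy function (base 2), with `h(0) = h(1) = 0`. -/
noncomputable def binEnt (x : ℝ) : ℝ := -(x * Real.logb 2 x) - (1 - x) * Real.logb 2 (1 - x)

lemma aux1 : Tendsto (fun x : ℝ => (Real.log (1+x) - Real.log (1-x)) / (2*x))
    (nhdsWithin (0:ℝ) (Set.Ioi 0)) (nhds 1) := by
  apply HasDerivAt.lhopital_zero_right_on_Ioo (a := (0:ℝ)) (b := 1)
    (f' := fun x => (1+x)⁻¹ + (1-x)⁻¹) (g' := fun _ => 2) one_pos
  · intro x hx
    have h1 : (1:ℝ) + x ≠ 0 := by nlinarith [hx.1]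
    have h2 : (1:ℝ) - x ≠ 0 := by nlinarith [hx.2]
    have d1 : HasDerivAt (fun x : ℝ => Real.log (1+x)) ((1+x)⁻¹) x := by
      simpa [Function.comp_def] using (Real.hasDerivAt_log h1).comp x ((hasDerivAt_id x).const_add 1)
    have d2 : HasDerivAt (fun x : ℝ => Real.log (1-x)) (-(1-x)⁻¹) x := by
      simpa [Function.comp_def] using (Real.hasDerivAt_log h2).comp x ((hasDerivAt_id x).neg.const_add 1)
    simpa [sub_neg_eq_add, Pi.sub_def] using d1.sub d2
  · intro x _
    simpa using (hasDerivAt_id x).const_mul (2:ℝ)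
  · intro x _; norm_num
  · have : Tendsto (fun x : ℝ => Real.log (1+x) - Real.log (1-x)) (nhds 0) (nhds 0) := by
      have : ContinuousAt (fun x : ℝ => Real.log (1+x) - Real.log (1-x)) 0 := by
        apply ContinuousAt.sub
        · exact (Real.continuousAt_log (by norm_num)).comp (by fun_prop)
        · exact (Real.continuousAt_log (by norm_num)).comp (by fun_prop)
      simpa using this.tendsto
    exact this.mono_left nhdsWithin_le_nhds
  · have : Tendsto (fun x : ℝ => 2*x) (nhds 0) (nhds 0) := by
      simpa [Pi.mul_def] using (continuous_const.mul continuous_id).tendsto (0:ℝ)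
    exact this.mono_left nhdsWithin_le_nhds
  · have : Tendsto (fun x : ℝ => ((1+x)⁻¹ + (1-x)⁻¹) / 2) (nhds 0) (nhds 1) := by
      have : ContinuousAt (fun x : ℝ => ((1+x)⁻¹ + (1-x)⁻¹) / 2) 0 := by
        apply ContinuousAt.div_const
        apply ContinuousAt.add
        · exact ContinuousAt.inv₀ (by fun_prop) (by norm_num)
        · exact ContinuousAt.inv₀ (by fun_prop) (by norm_num)
      have h := this.tendsto
      norm_num at h
      exact h
    exact this.mono_left nhdsWithin_le_nhds

lemma aux2 : Tendsto (fun x : ℝ => ((1+x) * Real.log (1+x) + (1-x) * Real.log (1-x)) / x^2)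
    (nhdsWithin (0:ℝ) (Set.Ioi 0)) (nhds 1) := by
  apply HasDerivAt.lhopital_zero_right_on_Ioo (a := (0:ℝ)) (b := 1)
    (f' := fun x => Real.log (1+x) - Real.log (1-x)) (g' := fun x => 2*x) one_pos
  · intro x hx
    have h1 : (0:ℝ) < 1 + x := by nlinarith [hx.1]
    have h2 : (0:ℝ) < 1 - x := by nlinarith [hx.2]
    have d1 : HasDerivAt (fun x : ℝ => (1+x) * Real.log (1+x)) (Real.log (1+x) + 1) x := by
      have dl : HasDerivAt (fun x : ℝ => Real.log (1+x)) ((1+x)⁻¹) x := by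
        simpa [Function.comp_def] using (Real.hasDerivAt_log h1.ne').comp x ((hasDerivAt_id x).const_add 1)
      have this : HasDerivAt (fun y : ℝ => (1+y) * Real.log (1+y)) (1 * Real.log (1+x) + (1+x) * (1+x)⁻¹) x := ((hasDerivAt_id x).const_add 1).mul dl
      convert this using 1
      field_simp
    have d2 : HasDerivAt (fun x : ℝ => (1-x) * Real.log (1-x)) (-(Real.log (1-x) + 1)) x := by
      have dl : HasDerivAt (fun x : ℝ => Real.log (1-x)) (-(1-x)⁻¹) x := by
        simpa [Function.comp_def] using (Real.hasDerivAt_log h2.ne').comp x ((hasDerivAt_id x).neg.const_add 1)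
      have this : HasDerivAt (fun y : ℝ => (1-y) * Real.log (1-y)) (-1 * Real.log (1-x) + (1 + -x) * -(1-x)⁻¹) x := ((hasDerivAt_id x).neg.const_add 1).mul dl
      convert this using 1
      field_simp
      ring
    have this : HasDerivAt (fun y : ℝ => (1+y) * Real.log (1+y) + (1-y) * Real.log (1-y)) _ x := d1.add d2
    convert this using 1
    ring
  · intro x _
    have : HasDerivAt (fun x : ℝ => x^2) (2 * x^1) x := hasDerivAt_pow 2 x
    simpa using this
  · intro x hx
    have := hx.1
    positivity
  · have : ContinuousAt (fun x : ℝ => (1+x) * Real.log (1+x) + (1-x) * Real.log (1-x)) 0 := by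
      apply ContinuousAt.add
      · exact (by fun_prop : ContinuousAt (fun x : ℝ => (1:ℝ)+x) 0).mul
          ((Real.continuousAt_log (by norm_num)).comp (by fun_prop))
      · exact (by fun_prop : ContinuousAt (fun x : ℝ => (1:ℝ)-x) 0).mul
          ((Real.continuousAt_log (by norm_num)).comp (by fun_prop))
    have h := this.tendsto
    norm_num at h
    exact h.mono_left nhdsWithin_le_nhds
  · have : Tendsto (fun x : ℝ => x^2) (nhds 0) (nhds 0) := by
      simpa using (continuous_pow 2).tendsto (0:ℝ)
    exact this.mono_left nhdsWithin_le_nhds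
  · exact aux1

lemma auxkey (x : ℝ) (hx0 : 0 < x) (hx1 : x < 1) :
    (1/x)^2 * (1 - binEnt (1/2 + x/2)) =
      ((1+x) * Real.log (1+x) + (1-x) * Real.log (1-x)) / x^2 * (1 / (2 * Real.log 2)) := by
  have hlog2 : Real.log 2 ≠ 0 := ne_of_gt (Real.log_pos one_lt_two)
  have l1 : Real.log (1/2 + x/2) = Real.log (1+x) - Real.log 2 := by
    rw [show (1:ℝ)/2 + x/2 = (1+x)/2 by ring, Real.log_div (by linarith) (by norm_num)]
  have l2 : Real.log (1/2 - x/2) = Real.log (1-x) - Real.log 2 := by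
    rw [show (1:ℝ)/2 - x/2 = (1-x)/2 by ring, Real.log_div (by linarith) (by norm_num)]
  rw [binEnt, Real.logb, Real.logb, show (1:ℝ) - (1/2 + x/2) = 1/2 - x/2 by ring, l1, l2]
  field_simp
  ring

/-- `lim_{c→∞} c² (1 - h(1/2 + 1/(2c))) = 1/(2 ln 2)`. -/
theorem stmt9 :
    Tendsto (fun c : ℕ => (c : ℝ)^2 * (1 - binEnt (1/2 + 1/(2*(c : ℝ)))))
      atTop (nhds (1 / (2 * Real.log 2))) := by
  have h1 : Tendsto (fun c : ℕ => 1/(c:ℝ)) atTop (nhdsWithin (0:ℝ) (Set.Ioi 0)) := by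
    rw [tendsto_nhdsWithin_iff]
    constructor
    · exact tendsto_one_div_atTop_nhds_zero_nat
    · filter_upwards [eventually_ge_atTop 1] with c hc
      have : (0:ℝ) < c := by exact_mod_cast hc
      exact Set.mem_Ioi.mpr (by positivity)
  have h2 := (aux2.comp h1).mul_const (1 / (2 * Real.log 2))
  rw [one_mul] at h2
  apply h2.congr'
  filter_upwards [eventually_ge_atTop 2] with c hc
  have hc0 : (0:ℝ) < c := by exact_mod_cast (by omega : 0 < c)
  have hx0 : 0 < 1/(c:ℝ) := by positivity
  have hx1 : 1/(c:ℝ) < 1 := by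
    rw [div_lt_one hc0]; exact_mod_cast (by omega : 1 < c)
  have := auxkey (1/(c:ℝ)) hx0 hx1
  rw [show (1:ℝ)/(1/(c:ℝ)) = (c:ℝ) by field_simp,
    show (1:ℝ)/2 + (1/(c:ℝ))/2 = 1/2 + 1/(2*(c:ℝ)) by ring] at this
  simpa [Function.comp] using this.symm
end

section
/- Define f: [0,1] → ℝ by f(u) = h((1-u)/2) - (1-u), where h is the binary entropy function (log base 2, with h(0) = h(1) = 0). Then f attains its maximum on [0,1] uniquely at u = 3/5, and f(3/5) = log₂(5/4). -/
open Real

/-- Strict positivity of the KL-type expression away from `x = 1/5`. -/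
lemma kl_pos (x : ℝ) (hx0 : 0 ≤ x) (hx1 : x ≤ 1) (hne : x ≠ 1/5) :
    0 < x * Real.log x + (1-x) * Real.log (1-x) + Real.log 5 - (1-x) * Real.log 4 := by
  rcases eq_or_lt_of_le hx0 with h0 | h0
  · have : Real.log 4 < Real.log 5 := Real.log_lt_log (by norm_num) (by norm_num)
    simp [← h0]
    linarith
  rcases eq_or_lt_of_le hx1 with h1 | h1
  · subst h1
    have : 0 < Real.log 5 := Real.log_pos (by norm_num)
    simp
    linarith
  -- 0 < x < 1
  have hx1' : 0 < 1 - x := by linarith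
  have h5x : (0:ℝ) < 5 * x := by linarith
  have ht : (0:ℝ) < 5 * (1 - x) / 4 := by linarith
  -- strict: log (5x) > 1 - 1/(5x)
  have i1 : 1 - 1/(5*x) < Real.log (5*x) := by
    have hne' : (5*x)⁻¹ ≠ 1 := by
      intro h
      apply hne
      field_simp at h
      linarith
    have := Real.log_lt_sub_one_of_pos (inv_pos.mpr h5x) hne'
    rw [Real.log_inv] at this
    rw [one_div]
    linarith
  -- nonstrict: log (5(1-x)/4) ≥ 1 - 4/(5(1-x))
  have i2 : 1 - 4/(5*(1-x)) ≤ Real.log (5*(1-x)/4) := by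
    have := Real.log_le_sub_one_of_pos (inv_pos.mpr ht)
    rw [Real.log_inv] at this
    have hinv : (5*(1-x)/4)⁻¹ = 4/(5*(1-x)) := by
      field_simp
    rw [hinv] at this
    linarith
  have p1 : x - 1/5 < x * Real.log (5*x) := by
    have := mul_lt_mul_of_pos_left i1 h0
    have e : x * (1 - 1/(5*x)) = x - 1/5 := by
      field_simp
    linarith [e ▸ this]
  have p2 : (1-x) - 4/5 ≤ (1-x) * Real.log (5*(1-x)/4) := by
    have := mul_le_mul_of_nonneg_left i2 (le_of_lt hx1')
    have e : (1-x) * (1 - 4/(5*(1-x))) = (1-x) - 4/5 := by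
      field_simp
    linarith [e ▸ this]
  have q1 : x * Real.log (5*x) = x * Real.log 5 + x * Real.log x := by
    rw [Real.log_mul (by norm_num) (ne_of_gt h0)]; ring
  have q2 : (1-x) * Real.log (5*(1-x)/4)
      = (1-x) * Real.log 5 + (1-x) * Real.log (1-x) - (1-x) * Real.log 4 := by
    rw [Real.log_div (by positivity) (by norm_num),
        Real.log_mul (by norm_num) (ne_of_gt hx1')]
    ring
  linarith

/-- The KL expression vanishes at `x = 1/5`. -/
lemma kl_zero :
    (1/5:ℝ) * Real.log (1/5) + (1-1/5) * Real.log (1-1/5) + Real.log 5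
      - (1-1/5) * Real.log 4 = 0 := by
  have e1 : Real.log (1/5:ℝ) = -Real.log 5 := by
    rw [one_div, Real.log_inv]
  have e2 : Real.log (4/5:ℝ) = Real.log 4 - Real.log 5 :=
    Real.log_div (by norm_num) (by norm_num)
  rw [show (1:ℝ)-1/5 = 4/5 by norm_num, e1, e2]
  ring

/-- Relation between `binEnt x - 2x - log₂(5/4)` and the KL expression. -/
lemma rel (x : ℝ) :
    binEnt x - 2*x - Real.logb 2 (5/4)
      = -((x * Real.log x + (1-x) * Real.log (1-x) + Real.log 5 - (1-x) * Real.log 4)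
          / Real.log 2) := by
  have hl2 : Real.log 2 ≠ 0 := by
    have := Real.log_pos (by norm_num : (1:ℝ) < 2); linarith
  have e4 : Real.log 4 = 2 * Real.log 2 := by
    rw [show (4:ℝ) = 2^2 by norm_num, Real.log_pow]; push_cast; ring
  have e54 : Real.log (5/4:ℝ) = Real.log 5 - Real.log 4 := by
    rw [Real.log_div (by norm_num) (by norm_num)]
  unfold binEnt Real.logb
  rw [e54, e4]
  field_simp
  ring

/-- `f(u) = h((1-u)/2) - (1-u)` attains its maximum on `[0,1]` uniquely at
`u = 3/5`, with maximum value `log₂(5/4)`. -/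
theorem stmt15 :
    IsMaxOn (fun u : ℝ => binEnt ((1 - u)/2) - (1 - u)) (Set.Icc (0:ℝ) 1) (3/5) ∧
    (∀ u ∈ Set.Icc (0:ℝ) 1,
        binEnt ((1 - u)/2) - (1 - u) = binEnt ((1 - 3/5)/2) - (1 - 3/5) → u = 3/5) ∧
    binEnt ((1 - 3/5)/2) - (1 - 3/5) = Real.logb 2 (5/4) := by
  have hl2 : 0 < Real.log 2 := Real.log_pos (by norm_num)
  -- value at u = 3/5
  have hval : binEnt ((1 - 3/5)/2) - (1 - 3/5) = Real.logb 2 (5/4) := by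
    have h : ((1:ℝ) - 3/5)/2 = 1/5 := by norm_num
    rw [h]
    have := rel (1/5)
    rw [kl_zero] at this
    simp at this
    have h2 : ((1:ℝ) - 3/5) = 2 * (1/5) := by norm_num
    rw [h2]
    linarith
  refine ⟨?_, ?_, hval⟩
  · rintro u ⟨hu0, hu1⟩
    simp only [Set.mem_setOf_eq]
    rw [hval]
    set x := ((1:ℝ) - u)/2 with hx
    have hx0 : 0 ≤ x := by rw [hx]; linarith
    have hx1 : x ≤ 1 := by rw [hx]; linarith
    have h2x : (1:ℝ) - u = 2 * x := by rw [hx]; ring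
    rw [h2x]
    by_cases hne : x = 1/5
    · rw [hne]
      have := rel (1/5)
      rw [kl_zero] at this
      simp at this
      linarith
    · have hpos := kl_pos x hx0 hx1 hne
      have := rel x
      have hdiv : 0 < (x * Real.log x + (1-x) * Real.log (1-x) + Real.log 5
          - (1-x) * Real.log 4) / Real.log 2 := div_pos hpos hl2
      linarith
  · rintro u ⟨hu0, hu1⟩ heq
    rw [hval] at heq
    set x := ((1:ℝ) - u)/2 with hx
    have hx0 : 0 ≤ x := by rw [hx]; linarith
    have hx1 : x ≤ 1 := by rw [hx]; linarith
    have h2x : (1:ℝ) - u = 2 * x := by rw [hx]; ring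
    rw [h2x] at heq
    by_contra hne
    have hxne : x ≠ 1/5 := by
      intro h
      apply hne
      have : (1:ℝ) - u = 2 * (1/5) := by rw [← h, ← h2x]
      linarith
    have hpos := kl_pos x hx0 hx1 hxne
    have := rel x
    have hdiv : 0 < (x * Real.log x + (1-x) * Real.log (1-x) + Real.log 5
        - (1-x) * Real.log 4) / Real.log 2 := div_pos hpos hl2
    linarith
end

section
/- Let B_c ~ Binomial(c, 1/2) and let h be the binary entropy function (log base 2). Then lim_{c→∞} c·(1 - E[h(B_c/c)]) = 1/(2 ln 2). -/
open Real Filter Finset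

lemma aux_log_lb {t : ℝ} (ht : 0 ≤ t) : t - t^2/2 ≤ Real.log (1+t) := by
  have hd : ∀ x ∈ interior (Set.Ici (0:ℝ)), HasDerivAt
      (fun y : ℝ => Real.log (1+y) - y + y^2/2) (1/(1+x) - 1 + x) x := by
    intro x hx
    rw [interior_Ici] at hx
    have h1 : (0:ℝ) < 1 + x := by simp at hx; linarith
    have hl : HasDerivAt (fun y : ℝ => Real.log (1+y)) (1/(1+x)) x := by
      have := (HasDerivAt.const_add 1 (hasDerivAt_id x)).log h1.ne'
      simpa using this
    have := (hl.sub (hasDerivAt_id x)).add ((hasDerivAt_pow 2 x).div_const 2)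
    refine this.congr_deriv ?_
    norm_num <;> ring
  have cont : ContinuousOn (fun y : ℝ => Real.log (1+y) - y + y^2/2) (Set.Ici 0) := by
    apply ContinuousOn.add
    · apply ContinuousOn.sub _ continuousOn_id
      apply ContinuousOn.log (by fun_prop)
      intro x hx; simp at hx ⊢; linarith
    · fun_prop
  have mono : MonotoneOn (fun y : ℝ => Real.log (1+y) - y + y^2/2) (Set.Ici 0) := by
    apply monotoneOn_of_deriv_nonneg (convex_Ici 0) cont
    · intro x hx; exact ((hd x hx).differentiableAt).differentiableWithinAt
    · intro x hx
      rw [(hd x hx).deriv]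
      rw [interior_Ici] at hx; simp at hx
      have h1 : (0:ℝ) < 1 + x := by linarith
      have : 1/(1+x) - 1 + x = x^2/(1+x) := by field_simp; ring
      rw [this]; positivity
  have := mono (Set.self_mem_Ici) ht ht
  simp at this
  linarith

lemma aux_log_ub {t : ℝ} (ht : 0 ≤ t) : Real.log (1+t) ≤ t - t^2/2 + t^3/3 := by
  have hd : ∀ x ∈ interior (Set.Ici (0:ℝ)), HasDerivAt
      (fun y : ℝ => y - y^2/2 + y^3/3 - Real.log (1+y)) (1 - x + x^2 - 1/(1+x)) x := by
    intro x hx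
    rw [interior_Ici] at hx
    have h1 : (0:ℝ) < 1 + x := by simp at hx; linarith
    have hl : HasDerivAt (fun y : ℝ => Real.log (1+y)) (1/(1+x)) x := by
      have := (HasDerivAt.const_add 1 (hasDerivAt_id x)).log h1.ne'
      simpa using this
    have := (((hasDerivAt_id x).sub ((hasDerivAt_pow 2 x).div_const 2)).add
      ((hasDerivAt_pow 3 x).div_const 3)).sub hl
    refine this.congr_deriv ?_
    norm_num <;> ring
  have cont : ContinuousOn (fun y : ℝ => y - y^2/2 + y^3/3 - Real.log (1+y)) (Set.Ici 0) := by
    apply ContinuousOn.sub (by fun_prop)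
    apply ContinuousOn.log (by fun_prop)
    intro x hx; simp at hx ⊢; linarith
  have mono : MonotoneOn (fun y : ℝ => y - y^2/2 + y^3/3 - Real.log (1+y)) (Set.Ici 0) := by
    apply monotoneOn_of_deriv_nonneg (convex_Ici 0) cont
    · intro x hx; exact ((hd x hx).differentiableAt).differentiableWithinAt
    · intro x hx
      rw [(hd x hx).deriv]
      rw [interior_Ici] at hx; simp at hx
      have h1 : (0:ℝ) < 1 + x := by linarith
      have : 1 - x + x^2 - 1/(1+x) = x^3/(1+x) := by field_simp; ring
      rw [this]; positivity
  have := mono (Set.self_mem_Ici) ht ht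
  simp at this
  linarith

lemma aux_log1m {t : ℝ} (ht : 0 ≤ t) (ht1 : t < 1) :
    t + t^2/2 + t^3/3 ≤ -Real.log (1-t) := by
  have hd : ∀ x ∈ interior (Set.Ico (0:ℝ) 1), HasDerivAt
      (fun y : ℝ => -Real.log (1-y) - y - y^2/2 - y^3/3) (1/(1-x) - 1 - x - x^2) x := by
    intro x hx
    rw [interior_Ico] at hx
    have h1 : (0:ℝ) < 1 - x := by simp at hx; linarith [hx.2]
    have hl : HasDerivAt (fun y : ℝ => Real.log (1-y)) (-(1/(1-x))) x := by
      have h2 : HasDerivAt (fun y : ℝ => 1-y) (-1) x := by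
        simpa using (HasDerivAt.const_sub 1 (hasDerivAt_id x))
      have := h2.log h1.ne'
      convert this using 1
      field_simp
    have := (((hl.neg.sub (hasDerivAt_id x)).sub
      ((hasDerivAt_pow 2 x).div_const 2)).sub ((hasDerivAt_pow 3 x).div_const 3))
    refine this.congr_deriv ?_
    norm_num <;> ring
  have cont : ContinuousOn (fun y : ℝ => -Real.log (1-y) - y - y^2/2 - y^3/3)
      (Set.Ico (0:ℝ) 1) := by
    apply ContinuousOn.sub; apply ContinuousOn.sub; apply ContinuousOn.sub
    · apply ContinuousOn.neg
      apply ContinuousOn.log (by fun_prop)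
      intro x hx; simp at hx ⊢; linarith [hx.2]
    all_goals fun_prop
  have mono : MonotoneOn (fun y : ℝ => -Real.log (1-y) - y - y^2/2 - y^3/3)
      (Set.Ico (0:ℝ) 1) := by
    apply monotoneOn_of_deriv_nonneg (convex_Ico 0 1) cont
    · intro x hx; exact ((hd x hx).differentiableAt).differentiableWithinAt
    · intro x hx
      rw [(hd x hx).deriv]
      rw [interior_Ico] at hx
      obtain ⟨hx0, hx1⟩ := hx
      have h1 : (0:ℝ) < 1 - x := by linarith
      have : 1/(1-x) - 1 - x - x^2 = x^3/(1-x) := by field_simp; ring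
      rw [this]; positivity
  have := mono (by constructor <;> norm_num) (Set.mem_Ico.2 ⟨ht, ht1⟩) ht
  simp at this
  linarith

lemma aux_L3 {t : ℝ} (ht : 0 ≤ t) : t + t^2/2 - t^3/6 ≤ (1+t) * Real.log (1+t) := by
  have hd : ∀ x ∈ interior (Set.Ici (0:ℝ)), HasDerivAt
      (fun y : ℝ => (1+y) * Real.log (1+y) - y - y^2/2 + y^3/6)
      (Real.log (1+x) - x + x^2/2) x := by
    intro x hx
    rw [interior_Ici] at hx
    have h1 : (0:ℝ) < 1 + x := by simp at hx; linarith
    have h2 : HasDerivAt (fun y : ℝ => 1+y) 1 x := by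
      simpa using (HasDerivAt.const_add 1 (hasDerivAt_id x))
    have hl : HasDerivAt (fun y : ℝ => Real.log (1+y)) (1/(1+x)) x := by
      simpa using h2.log h1.ne'
    have := (((h2.mul hl).sub (hasDerivAt_id x)).sub
      ((hasDerivAt_pow 2 x).div_const 2)).add ((hasDerivAt_pow 3 x).div_const 6)
    refine this.congr_deriv ?_
    norm_num; field_simp
    ring
  have cont : ContinuousOn (fun y : ℝ => (1+y) * Real.log (1+y) - y - y^2/2 + y^3/6)
      (Set.Ici (0:ℝ)) := by
    apply ContinuousOn.add; apply ContinuousOn.sub; apply ContinuousOn.sub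
    · apply ContinuousOn.mul (by fun_prop)
      apply ContinuousOn.log (by fun_prop)
      intro x hx; simp at hx ⊢; linarith
    all_goals fun_prop
  have mono : MonotoneOn (fun y : ℝ => (1+y) * Real.log (1+y) - y - y^2/2 + y^3/6)
      (Set.Ici (0:ℝ)) := by
    apply monotoneOn_of_deriv_nonneg (convex_Ici 0) cont
    · intro x hx; exact ((hd x hx).differentiableAt).differentiableWithinAt
    · intro x hx
      rw [(hd x hx).deriv]
      rw [interior_Ici] at hx; simp at hx
      have := aux_log_lb hx.le
      linarith
  have := mono (Set.self_mem_Ici) ht ht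
  simp at this
  linarith

lemma aux_L4 {t : ℝ} (ht : 0 ≤ t) (ht1 : t ≤ 1) :
    -t + t^2/2 + t^3/6 ≤ (1-t) * Real.log (1-t) := by
  have hd : ∀ x ∈ interior (Set.Icc (0:ℝ) 1), HasDerivAt
      (fun y : ℝ => (1-y) * Real.log (1-y) + y - y^2/2 - y^3/6)
      (-Real.log (1-x) - x - x^2/2) x := by
    intro x hx
    rw [interior_Icc] at hx
    obtain ⟨hx0, hx1⟩ := hx
    have h1 : (0:ℝ) < 1 - x := by linarith
    have h2 : HasDerivAt (fun y : ℝ => 1-y) (-1) x := by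
      simpa using (HasDerivAt.const_sub 1 (hasDerivAt_id x))
    have hl : HasDerivAt (fun y : ℝ => Real.log (1-y)) (-(1/(1-x))) x := by
      have := h2.log h1.ne'
      convert this using 1
      field_simp
    have := (((h2.mul hl).add (hasDerivAt_id x)).sub
      ((hasDerivAt_pow 2 x).div_const 2)).sub ((hasDerivAt_pow 3 x).div_const 6)
    refine this.congr_deriv ?_
    norm_num; field_simp
    ring
  have cont : ContinuousOn (fun y : ℝ => (1-y) * Real.log (1-y) + y - y^2/2 - y^3/6)
      (Set.Icc (0:ℝ) 1) := by
    apply ContinuousOn.sub; apply ContinuousOn.sub; apply ContinuousOn.add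
    · exact (Real.continuous_mul_log.comp (continuous_const.sub continuous_id)).continuousOn
    all_goals fun_prop
  have mono : MonotoneOn (fun y : ℝ => (1-y) * Real.log (1-y) + y - y^2/2 - y^3/6)
      (Set.Icc (0:ℝ) 1) := by
    apply monotoneOn_of_deriv_nonneg (convex_Icc 0 1) cont
    · intro x hx; exact ((hd x hx).differentiableAt).differentiableWithinAt
    · intro x hx
      rw [(hd x hx).deriv]
      rw [interior_Icc] at hx
      obtain ⟨hx0, hx1⟩ := hx
      have := aux_log1m hx0.le hx1
      nlinarith [pow_nonneg hx0.le 3]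
  have := mono (Set.mem_Icc.2 ⟨le_refl 0, by norm_num⟩) (Set.mem_Icc.2 ⟨ht, ht1⟩) ht
  simp at this
  linarith

lemma g_bounds {t : ℝ} (ht : 0 ≤ t) (ht1 : t ≤ 1) :
    t^2 ≤ (1+t) * Real.log (1+t) + (1-t) * Real.log (1-t) ∧
    (1+t) * Real.log (1+t) + (1-t) * Real.log (1-t) ≤ t^2 + 2/3 * t^4 := by
  constructor
  · have h1 := aux_L3 ht
    have h2 := aux_L4 ht ht1
    nlinarith
  · have h1 : (1+t) * Real.log (1+t) ≤ (1+t) * (t - t^2/2 + t^3/3) :=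
      mul_le_mul_of_nonneg_left (aux_log_ub ht) (by linarith)
    have h2 : (1-t) * Real.log (1-t) ≤ (1-t) * (-(t + t^2/2 + t^3/3)) := by
      rcases eq_or_lt_of_le ht1 with h | h
      · simp [← h]
      · apply mul_le_mul_of_nonneg_left _ (by linarith)
        have := aux_log1m ht h
        linarith
    nlinarith


lemma binEnt_sym (y : ℝ) : binEnt (1 - y) = binEnt y := by
  unfold binEnt
  rw [sub_sub_cancel]
  ring

lemma ent_eq (y : ℝ) (h0 : 0 ≤ y) (h1 : y ≤ 1) :
    2 * Real.log 2 * (1 - binEnt y) =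
      (2*y) * Real.log (2*y) + (2*(1-y)) * Real.log (2*(1-y)) := by
  have hlog2 : (0:ℝ) < Real.log 2 := Real.log_pos (by norm_num)
  have hy : (2*y) * Real.log (2*y) = 2*y*Real.log 2 + 2*y*Real.log y := by
    rcases eq_or_lt_of_le h0 with h | h
    · simp [← h]
    · rw [show (2:ℝ)*y = 2*y from rfl, Real.log_mul two_ne_zero h.ne']; ring
  have hy' : (2*(1-y)) * Real.log (2*(1-y)) =
      2*(1-y)*Real.log 2 + 2*(1-y)*Real.log (1-y) := by
    rcases eq_or_lt_of_le h1 with h | h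
    · simp [h]
    · rw [Real.log_mul two_ne_zero (by linarith : (1:ℝ)-y ≠ 0)]; ring
  rw [hy, hy']
  unfold binEnt Real.logb
  field_simp
  ring

lemma entBound (y : ℝ) (h0 : 0 ≤ y) (h1 : y ≤ 1) :
    |1 - binEnt y - 2*(y - 1/2)^2 / Real.log 2| ≤ 8 * (y - 1/2)^4 := by
  have hlog2 : (0:ℝ) < Real.log 2 := Real.log_pos (by norm_num)
  -- reduce to y ≥ 1/2
  have main : ∀ w : ℝ, 1/2 ≤ w → w ≤ 1 →
      |1 - binEnt w - 2*(w - 1/2)^2 / Real.log 2| ≤ 8 * (w - 1/2)^4 := by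
    intro w hw hw1
    set t := 2*w - 1 with htdef
    have ht0 : 0 ≤ t := by rw [htdef]; linarith
    have ht1 : t ≤ 1 := by rw [htdef]; linarith
    have hident := ent_eq w (by linarith) hw1
    rw [show (2:ℝ)*w = 1+t by rw [htdef]; ring,
        show (2:ℝ)*(1-w) = 1-t by rw [htdef]; ring] at hident
    have hE : 1 - binEnt w - 2*(w - 1/2)^2 / Real.log 2 =
        ((1+t) * Real.log (1+t) + (1-t) * Real.log (1-t) - t^2) / (2*Real.log 2) := by
      rw [← hident, htdef]
      field_simp
    obtain ⟨hg1, hg2⟩ := g_bounds ht0 ht1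
    rw [hE, abs_of_nonneg (by apply div_nonneg (by linarith) (by positivity))]
    rw [div_le_iff₀ (by positivity)]
    have ht4 : t^4 = 16*(w - 1/2)^4 := by rw [htdef]; ring
    rw [ht4] at hg2
    nlinarith [pow_nonneg (by linarith : (0:ℝ) ≤ w - 1/2) 4, Real.log_two_gt_d9]
  rcases le_or_gt (1/2) y with h | h
  · exact main y h h1
  · have := main (1 - y) (by linarith) (by linarith)
    rw [binEnt_sym] at this
    have e1 : (1 - y - 1/2)^2 = (y - 1/2)^2 := by ring
    have e2 : (1 - y - 1/2)^4 = (y - 1/2)^4 := by ring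
    rw [e1, e2] at this
    exact this

lemma pascal_sum (c : ℕ) (f : ℕ → ℝ) :
    ∑ z ∈ range (c+2), ((c+1).choose z : ℝ) * f z
      = ∑ z ∈ range (c+1), (c.choose z : ℝ) * (f z + f (z+1)) := by
  rw [Finset.sum_range_succ' (fun z => ((c+1).choose z : ℝ) * f z) (c+1)]
  have h1 : ∀ z, (((c+1).choose (z+1) : ℕ) : ℝ) = (c.choose z : ℝ) + (c.choose (z+1) : ℝ) := by
    intro z
    rw [Nat.choose_succ_succ']
    push_cast
    ring
  simp only [h1]
  have h2 : ∑ z ∈ range (c+1), ((c.choose z : ℝ) + (c.choose (z+1) : ℝ)) * f (z+1)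
      = ∑ z ∈ range (c+1), (c.choose z : ℝ) * f (z+1)
        + ∑ z ∈ range (c+1), (c.choose (z+1) : ℝ) * f (z+1) := by
    rw [← Finset.sum_add_distrib]
    apply Finset.sum_congr rfl
    intros; ring
  rw [h2]
  have h3 : ∑ z ∈ range (c+1), ((c.choose (z+1) : ℝ)) * f (z+1)
      = ∑ z ∈ range (c+1), (c.choose z : ℝ) * f z - (c.choose 0 : ℝ) * f 0 := by
    have e1 := Finset.sum_range_succ' (fun z => ((c.choose z : ℝ)) * f z) (c+1)
    have e2 := Finset.sum_range_succ (fun z => ((c.choose z : ℝ)) * f z) (c+1)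
    simp only [Nat.choose_succ_self, Nat.cast_zero, zero_mul, add_zero] at e2
    rw [e2] at e1
    linarith [e1]
  rw [h3]
  have h4 : ∑ z ∈ range (c+1), (c.choose z:ℝ)*(f z + f (z+1))
      = ∑ z ∈ range (c+1), (c.choose z:ℝ)*f z + ∑ z ∈ range (c+1), (c.choose z:ℝ)*f (z+1) := by
    rw [← Finset.sum_add_distrib]
    apply Finset.sum_congr rfl
    intros; ring
  rw [h4]
  simp
  ring

lemma moments (c : ℕ) :
    (∑ z ∈ range (c+1), (c.choose z : ℝ)) = 2^c ∧
    (∑ z ∈ range (c+1), (c.choose z : ℝ) * (z:ℝ)) = c * 2^c / 2 ∧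
    (∑ z ∈ range (c+1), (c.choose z : ℝ) * (z:ℝ)^2) = ((c:ℝ)^2 + c) * 2^c / 4 ∧
    (∑ z ∈ range (c+1), (c.choose z : ℝ) * (z:ℝ)^3) = ((c:ℝ)^3 + 3*(c:ℝ)^2) * 2^c / 8 ∧
    (∑ z ∈ range (c+1), (c.choose z : ℝ) * (z:ℝ)^4)
      = ((c:ℝ)^4 + 6*(c:ℝ)^3 + 3*(c:ℝ)^2 - 2*(c:ℝ)) * 2^c / 16 := by
  induction c with
  | zero => norm_num
  | succ c ih =>
    obtain ⟨i0, i1, i2, i3, i4⟩ := ih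
    refine ⟨?_, ?_, ?_, ?_, ?_⟩
    · calc ∑ z ∈ range (c+1+1), ((c+1).choose z:ℝ)
          = ∑ z ∈ range (c+2), ((c+1).choose z:ℝ)*1 := by simp
        _ = ∑ z ∈ range (c+1), (c.choose z:ℝ)*(1+1) := pascal_sum c (fun _ => 1)
        _ = 2 * ∑ z ∈ range (c+1), (c.choose z:ℝ) := by
            rw [Finset.mul_sum]; exact Finset.sum_congr rfl (by intros; ring)
        _ = 2^(c+1) := by rw [i0]; ring
    · calc ∑ z ∈ range (c+1+1), ((c+1).choose z:ℝ) * (z:ℝ)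
          = ∑ z ∈ range (c+1), (c.choose z:ℝ)*((z:ℝ) + ((z+1:ℕ):ℝ)) :=
            pascal_sum c (fun z => (z:ℝ))
        _ = 2*(∑ z ∈ range (c+1), (c.choose z:ℝ)*(z:ℝ)) + (∑ z ∈ range (c+1), (c.choose z:ℝ)) := by
            rw [Finset.mul_sum, ← Finset.sum_add_distrib]
            exact Finset.sum_congr rfl (by intros; push_cast; ring)
        _ = (↑(c+1)) * 2^(c+1) / 2 := by rw [i0, i1]; push_cast; ring
    · calc ∑ z ∈ range (c+1+1), ((c+1).choose z:ℝ) * (z:ℝ)^2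
          = ∑ z ∈ range (c+1), (c.choose z:ℝ)*((z:ℝ)^2 + ((z+1:ℕ):ℝ)^2) :=
            pascal_sum c (fun z => (z:ℝ)^2)
        _ = 2*(∑ z ∈ range (c+1), (c.choose z:ℝ)*(z:ℝ)^2)
            + 2*(∑ z ∈ range (c+1), (c.choose z:ℝ)*(z:ℝ))
            + (∑ z ∈ range (c+1), (c.choose z:ℝ)) := by
            rw [Finset.mul_sum, Finset.mul_sum, ← Finset.sum_add_distrib, ← Finset.sum_add_distrib]
            exact Finset.sum_congr rfl (by intros; push_cast; ring)
        _ = ((↑(c+1):ℝ)^2 + ↑(c+1)) * 2^(c+1) / 4 := by rw [i0, i1, i2]; push_cast; ring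
    · calc ∑ z ∈ range (c+1+1), ((c+1).choose z:ℝ) * (z:ℝ)^3
          = ∑ z ∈ range (c+1), (c.choose z:ℝ)*((z:ℝ)^3 + ((z+1:ℕ):ℝ)^3) :=
            pascal_sum c (fun z => (z:ℝ)^3)
        _ = 2*(∑ z ∈ range (c+1), (c.choose z:ℝ)*(z:ℝ)^3)
            + 3*(∑ z ∈ range (c+1), (c.choose z:ℝ)*(z:ℝ)^2)
            + 3*(∑ z ∈ range (c+1), (c.choose z:ℝ)*(z:ℝ))
            + (∑ z ∈ range (c+1), (c.choose z:ℝ)) := by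
            rw [Finset.mul_sum, Finset.mul_sum, Finset.mul_sum,
              ← Finset.sum_add_distrib, ← Finset.sum_add_distrib, ← Finset.sum_add_distrib]
            exact Finset.sum_congr rfl (by intros; push_cast; ring)
        _ = ((↑(c+1):ℝ)^3 + 3*(↑(c+1):ℝ)^2) * 2^(c+1) / 8 := by
            rw [i0, i1, i2, i3]; push_cast; ring
    · calc ∑ z ∈ range (c+1+1), ((c+1).choose z:ℝ) * (z:ℝ)^4
          = ∑ z ∈ range (c+1), (c.choose z:ℝ)*((z:ℝ)^4 + ((z+1:ℕ):ℝ)^4) :=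
            pascal_sum c (fun z => (z:ℝ)^4)
        _ = 2*(∑ z ∈ range (c+1), (c.choose z:ℝ)*(z:ℝ)^4)
            + 4*(∑ z ∈ range (c+1), (c.choose z:ℝ)*(z:ℝ)^3)
            + 6*(∑ z ∈ range (c+1), (c.choose z:ℝ)*(z:ℝ)^2)
            + 4*(∑ z ∈ range (c+1), (c.choose z:ℝ)*(z:ℝ))
            + (∑ z ∈ range (c+1), (c.choose z:ℝ)) := by
            rw [Finset.mul_sum, Finset.mul_sum, Finset.mul_sum, Finset.mul_sum,
              ← Finset.sum_add_distrib, ← Finset.sum_add_distrib, ← Finset.sum_add_distrib,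
              ← Finset.sum_add_distrib]
            exact Finset.sum_congr rfl (by intros; push_cast; ring)
        _ = ((↑(c+1):ℝ)^4 + 6*(↑(c+1):ℝ)^3 + 3*(↑(c+1):ℝ)^2 - 2*(↑(c+1):ℝ)) * 2^(c+1) / 16 := by
            rw [i0, i1, i2, i3, i4]; push_cast; ring



lemma central (c : ℕ) (hc : 1 ≤ c) :
    (∑ z ∈ range (c+1), (c.choose z:ℝ)*(1/2)^c) = 1 ∧
    (∑ z ∈ range (c+1), (c.choose z:ℝ)*(1/2)^c * ((z:ℝ)/c - 1/2)^2) = 1/(4*(c:ℝ)) ∧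
    (∑ z ∈ range (c+1), (c.choose z:ℝ)*(1/2)^c * ((z:ℝ)/c - 1/2)^4)
      = (3*(c:ℝ)-2)/(16*(c:ℝ)^3) := by
  obtain ⟨i0, i1, i2, i3, i4⟩ := moments c
  have hc0 : (c:ℝ) ≠ 0 := Nat.cast_ne_zero.mpr (by omega)
  have hP : ((2:ℝ))^c ≠ 0 := by positivity
  have hQeq : ((1:ℝ)/2)^c = ((2:ℝ)^c)⁻¹ := by rw [one_div, inv_pow]
  refine ⟨?_, ?_, ?_⟩
  · rw [← Finset.sum_mul, i0, hQeq, mul_inv_cancel₀ hP]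
  · have expand2 : ∀ z ∈ range (c+1), (c.choose z:ℝ)*(1/2)^c * ((z:ℝ)/c - 1/2)^2
        = ((1/2:ℝ)^c * (1/(c:ℝ)^2)) * ((c.choose z:ℝ)*(z:ℝ)^2)
          - ((1/2:ℝ)^c * (1/(c:ℝ))) * ((c.choose z:ℝ)*(z:ℝ))
          + ((1/2:ℝ)^c * (1/4)) * (c.choose z:ℝ) := by
      intro z _
      field_simp
      ring
    calc ∑ z ∈ range (c+1), (c.choose z:ℝ)*(1/2)^c * ((z:ℝ)/c - 1/2)^2
        = ∑ z ∈ range (c+1), (((1/2:ℝ)^c * (1/(c:ℝ)^2)) * ((c.choose z:ℝ)*(z:ℝ)^2)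
          - ((1/2:ℝ)^c * (1/(c:ℝ))) * ((c.choose z:ℝ)*(z:ℝ))
          + ((1/2:ℝ)^c * (1/4)) * (c.choose z:ℝ)) := Finset.sum_congr rfl expand2
      _ = ((1/2:ℝ)^c * (1/(c:ℝ)^2)) * (∑ z ∈ range (c+1), (c.choose z:ℝ)*(z:ℝ)^2)
          - ((1/2:ℝ)^c * (1/(c:ℝ))) * (∑ z ∈ range (c+1), (c.choose z:ℝ)*(z:ℝ))
          + ((1/2:ℝ)^c * (1/4)) * (∑ z ∈ range (c+1), (c.choose z:ℝ)) := by
          rw [Finset.sum_add_distrib, Finset.sum_sub_distrib,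
            ← Finset.mul_sum, ← Finset.mul_sum, ← Finset.mul_sum]
      _ = 1/(4*(c:ℝ)) := by
          rw [i0, i1, i2, hQeq]
          field_simp
          ring
  · have expand4 : ∀ z ∈ range (c+1), (c.choose z:ℝ)*(1/2)^c * ((z:ℝ)/c - 1/2)^4
        = ((1/2:ℝ)^c * (1/(c:ℝ)^4)) * ((c.choose z:ℝ)*(z:ℝ)^4)
          - ((1/2:ℝ)^c * (2/(c:ℝ)^3)) * ((c.choose z:ℝ)*(z:ℝ)^3)
          + ((1/2:ℝ)^c * (3/(2*(c:ℝ)^2))) * ((c.choose z:ℝ)*(z:ℝ)^2)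
          - ((1/2:ℝ)^c * (1/(2*(c:ℝ)))) * ((c.choose z:ℝ)*(z:ℝ))
          + ((1/2:ℝ)^c * (1/16)) * (c.choose z:ℝ) := by
      intro z _
      field_simp
      ring
    calc ∑ z ∈ range (c+1), (c.choose z:ℝ)*(1/2)^c * ((z:ℝ)/c - 1/2)^4
        = ∑ z ∈ range (c+1), (((1/2:ℝ)^c * (1/(c:ℝ)^4)) * ((c.choose z:ℝ)*(z:ℝ)^4)
          - ((1/2:ℝ)^c * (2/(c:ℝ)^3)) * ((c.choose z:ℝ)*(z:ℝ)^3)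
          + ((1/2:ℝ)^c * (3/(2*(c:ℝ)^2))) * ((c.choose z:ℝ)*(z:ℝ)^2)
          - ((1/2:ℝ)^c * (1/(2*(c:ℝ)))) * ((c.choose z:ℝ)*(z:ℝ))
          + ((1/2:ℝ)^c * (1/16)) * (c.choose z:ℝ)) := Finset.sum_congr rfl expand4
      _ = ((1/2:ℝ)^c * (1/(c:ℝ)^4)) * (∑ z ∈ range (c+1), (c.choose z:ℝ)*(z:ℝ)^4)
          - ((1/2:ℝ)^c * (2/(c:ℝ)^3)) * (∑ z ∈ range (c+1), (c.choose z:ℝ)*(z:ℝ)^3)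
          + ((1/2:ℝ)^c * (3/(2*(c:ℝ)^2))) * (∑ z ∈ range (c+1), (c.choose z:ℝ)*(z:ℝ)^2)
          - ((1/2:ℝ)^c * (1/(2*(c:ℝ)))) * (∑ z ∈ range (c+1), (c.choose z:ℝ)*(z:ℝ))
          + ((1/2:ℝ)^c * (1/16)) * (∑ z ∈ range (c+1), (c.choose z:ℝ)) := by
          rw [Finset.sum_add_distrib, Finset.sum_sub_distrib, Finset.sum_add_distrib,
            Finset.sum_sub_distrib,
            ← Finset.mul_sum, ← Finset.mul_sum, ← Finset.mul_sum, ← Finset.mul_sum,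
            ← Finset.mul_sum]
      _ = (3*(c:ℝ)-2)/(16*(c:ℝ)^3) := by
          rw [i0, i1, i2, i3, i4, hQeq]
          field_simp
          ring

/-- For `B_c ~ Bin(c, 1/2)`, `lim_{c→∞} c (1 - E[h(B_c/c)]) = 1/(2 ln 2)`. -/
theorem stmt16 :
    Tendsto (fun c : ℕ => (c : ℝ) *
        (1 - ∑ z ∈ Finset.range (c+1), (c.choose z : ℝ) * (1/2)^c * binEnt ((z : ℝ)/(c : ℝ))))
      atTop (nhds (1 / (2 * Real.log 2))) := by
  have hlog2 : (0:ℝ) < Real.log 2 := Real.log_pos (by norm_num)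
  rw [← tendsto_sub_nhds_zero_iff]
  refine squeeze_zero_norm' (a := fun c : ℕ => 2 / (c:ℝ)) ?_
    (tendsto_const_div_atTop_nhds_zero_nat 2)
  filter_upwards [eventually_ge_atTop 1] with c hc
  obtain ⟨A, B, C4⟩ := central c hc
  have hc0 : (c:ℝ) ≠ 0 := Nat.cast_ne_zero.mpr (by omega)
  have hcpos : (0:ℝ) < c := by positivity
  have hc1 : (1:ℝ) ≤ c := by exact_mod_cast hc
  -- rewrite the difference as c * Σ p_z d_z
  have hsub : ∑ z ∈ range (c+1), (c.choose z:ℝ)*(1/2)^c *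
        ((1 - binEnt ((z:ℝ)/(c:ℝ))) - 2*((z:ℝ)/(c:ℝ) - 1/2)^2 / Real.log 2)
      = ∑ z ∈ range (c+1), (c.choose z:ℝ)*(1/2)^c * (1 - binEnt ((z:ℝ)/(c:ℝ)))
        - ∑ z ∈ range (c+1), (c.choose z:ℝ)*(1/2)^c * (2*((z:ℝ)/(c:ℝ) - 1/2)^2 / Real.log 2) := by
    rw [← Finset.sum_sub_distrib]
    exact Finset.sum_congr rfl (by intros; ring)
  have hsplit : ∑ z ∈ range (c+1), (c.choose z:ℝ)*(1/2)^c * (1 - binEnt ((z:ℝ)/(c:ℝ)))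
      = 1 - ∑ z ∈ range (c+1), (c.choose z:ℝ)*(1/2)^c * binEnt ((z:ℝ)/(c:ℝ)) := by
    have : ∑ z ∈ range (c+1), (c.choose z:ℝ)*(1/2)^c * (1 - binEnt ((z:ℝ)/(c:ℝ)))
        = ∑ z ∈ range (c+1), (c.choose z:ℝ)*(1/2)^c
          - ∑ z ∈ range (c+1), (c.choose z:ℝ)*(1/2)^c * binEnt ((z:ℝ)/(c:ℝ)) := by
      rw [← Finset.sum_sub_distrib]
      exact Finset.sum_congr rfl (by intros; ring)
    rw [this, A]
  have hq : ∑ z ∈ range (c+1), (c.choose z:ℝ)*(1/2)^c * (2*((z:ℝ)/(c:ℝ) - 1/2)^2 / Real.log 2)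
      = (2/Real.log 2) * (1/(4*(c:ℝ))) := by
    have : ∑ z ∈ range (c+1), (c.choose z:ℝ)*(1/2)^c * (2*((z:ℝ)/(c:ℝ) - 1/2)^2 / Real.log 2)
        = (2/Real.log 2) * ∑ z ∈ range (c+1), (c.choose z:ℝ)*(1/2)^c * ((z:ℝ)/(c:ℝ) - 1/2)^2 := by
      rw [Finset.mul_sum]
      exact Finset.sum_congr rfl (by intros; ring)
    rw [this, B]
  have key : (c:ℝ) * (1 - ∑ z ∈ range (c+1), (c.choose z:ℝ)*(1/2)^c * binEnt ((z:ℝ)/(c:ℝ)))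
        - 1/(2*Real.log 2)
      = (c:ℝ) * ∑ z ∈ range (c+1), (c.choose z:ℝ)*(1/2)^c *
          ((1 - binEnt ((z:ℝ)/(c:ℝ))) - 2*((z:ℝ)/(c:ℝ) - 1/2)^2 / Real.log 2) := by
    rw [hsub, hsplit, hq]
    generalize (∑ z ∈ range (c+1), (c.choose z:ℝ)*(1/2)^c * binEnt ((z:ℝ)/(c:ℝ))) = S
    field_simp
    ring
  rw [Real.norm_eq_abs, key, abs_mul, abs_of_nonneg (le_of_lt hcpos)]
  have habs : |∑ z ∈ range (c+1), (c.choose z:ℝ)*(1/2)^c *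
        ((1 - binEnt ((z:ℝ)/(c:ℝ))) - 2*((z:ℝ)/(c:ℝ) - 1/2)^2 / Real.log 2)|
      ≤ 8 * ((3*(c:ℝ)-2)/(16*(c:ℝ)^3)) := by
    refine (Finset.abs_sum_le_sum_abs _ _).trans ?_
    have step : ∀ z ∈ range (c+1), |(c.choose z:ℝ)*(1/2)^c *
          ((1 - binEnt ((z:ℝ)/(c:ℝ))) - 2*((z:ℝ)/(c:ℝ) - 1/2)^2 / Real.log 2)|
        ≤ (c.choose z:ℝ)*(1/2)^c * (8 * ((z:ℝ)/(c:ℝ) - 1/2)^4) := by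
      intro z hz
      have hznn : (0:ℝ) ≤ (c.choose z:ℝ)*(1/2)^c := by positivity
      rw [abs_mul, abs_of_nonneg hznn]
      apply mul_le_mul_of_nonneg_left _ hznn
      have hzc : (z:ℝ)/(c:ℝ) ≤ 1 := by
        rw [div_le_one hcpos]
        exact_mod_cast Finset.mem_range_succ_iff.mp hz
      exact entBound ((z:ℝ)/(c:ℝ)) (by positivity) hzc
    refine (Finset.sum_le_sum step).trans_eq ?_
    have : ∑ z ∈ range (c+1), (c.choose z:ℝ)*(1/2)^c * (8 * ((z:ℝ)/(c:ℝ) - 1/2)^4)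
        = 8 * ∑ z ∈ range (c+1), (c.choose z:ℝ)*(1/2)^c * ((z:ℝ)/(c:ℝ) - 1/2)^4 := by
      rw [Finset.mul_sum]
      exact Finset.sum_congr rfl (by intros; ring)
    rw [this, C4]
  calc (c:ℝ) * |∑ z ∈ range (c+1), (c.choose z:ℝ)*(1/2)^c *
          ((1 - binEnt ((z:ℝ)/(c:ℝ))) - 2*((z:ℝ)/(c:ℝ) - 1/2)^2 / Real.log 2)|
      ≤ (c:ℝ) * (8 * ((3*(c:ℝ)-2)/(16*(c:ℝ)^3))) :=
        mul_le_mul_of_nonneg_left habs (le_of_lt hcpos)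
    _ ≤ 2/(c:ℝ) := by
        have e : (c:ℝ)*(8*((3*(c:ℝ)-2)/(16*(c:ℝ)^3))) = (3*(c:ℝ)-2)/(2*(c:ℝ)^2) := by
          field_simp; ring
        rw [e, div_le_div_iff₀ (by positivity) hcpos]
        nlinarith
end
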